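/- arXiv:1301.6665 — 2 statements merged into one kernel-verified Lean document; each statement's English description precedes it below -/
import Mathlib

section
/- For every n ∈ ℕ, the subset V_n = {χ ∈ Sp C | deg χ ≤ n} is closed in Sp C. -/
open CategoryTheory CategoryTheory.Limits ZeroObject

universe w v u

namespace BrauerThrall

/-- A character for an additive category `D` (with zero morphisms):
a function on objects, additive on biproducts and subadditive on
right exact sequences `X → Y → Z → 0` (`Z` a cokernel of `X → Y`). -/
structure Character (D : Type u) [Category.{v} D] [HasZeroMorphisms D] where
  toFun : D → ℕ
  additive : ∀ (X Y : D) (b : BinaryBicone X Y), b.IsBilimit → toFun b.pt = toFun X + toFun Y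
  subadditive : ∀ ⦃X Y : D⦄ (f : X ⟶ Y) (c : CokernelCofork f), IsColimit c →
    toFun Y ≤ toFun X + toFun c.pt

variable {D : Type u} [Category.{v} D] [HasZeroMorphisms D]

/-- A character is irreducible if it is nonzero and not the sum of two nonzero characters. -/
def Character.IsIrreducible (χ : Character D) : Prop :=
  χ.toFun ≠ 0 ∧ ¬ ∃ φ ψ : Character D, φ.toFun ≠ 0 ∧ ψ.toFun ≠ 0 ∧
    ∀ X : D, χ.toFun X = φ.toFun X + ψ.toFun X

/-- `Sp D`, the set of irreducible characters. -/
def Sp (D : Type u) [Category.{v} D] [HasZeroMorphisms D] : Type u :=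
  {χ : Character D // χ.IsIrreducible}

variable {C : Type u} [Category.{v} C] [Abelian C]

/-- For a morphism `α : X ⟶ Y`, `χ(α) = χ(X) - χ(Y) + χ(Coker α)`. -/
noncomputable def Character.eval (χ : Character C) {X Y : C} (α : X ⟶ Y) : ℤ :=
  (χ.toFun X : ℤ) - χ.toFun Y + χ.toFun (cokernel α)

variable (C) in
/-- The basic open subsets `U_α` of `Sp C`. -/
def spBasis : Set (Set (Sp C)) :=
  {U | ∃ (X Y : C) (α : X ⟶ Y), U = {χ : Sp C | χ.1.eval α ≠ 0}}

variable (C) in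
/-- The Ziegler-type topology on `Sp C`, generated by the sets `U_α`. -/
noncomputable def spTopology : TopologicalSpace (Sp C) :=
  TopologicalSpace.generateFrom (spBasis C)

/-- `χ` is the character `χ_M` of the object `M`, i.e. `χ(X)` is the length of
`Hom(X, M)` as a module over `End(M)` (the length of a module being the
supremum of the lengths of chains of submodules). -/
def IsCharOf (χ : Character C) (M : C) : Prop :=
  ∀ X : C, ((χ.toFun X : ℕ∞) : WithBot ℕ∞) = Order.krullDim (Submodule (End M) (X ⟶ M))

/-- A morphism `φ : M ⟶ N` is left almost split if it is not a split monomorphism and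
every non-split-monomorphism out of `M` factors through it. -/
def IsLeftAlmostSplit {M N : C} (φ : M ⟶ N) : Prop :=
  ¬ IsSplitMono φ ∧ ∀ (N' : C) (g : M ⟶ N'), ¬ IsSplitMono g → ∃ h : N ⟶ N', φ ≫ h = g

variable (C) in
/-- The standard hypotheses: `C` is a length category (all objects are noetherian and
artinian), `Hom`-finite over `k`, with finitely many simple objects up to isomorphism. -/
def LengthCategory (k : Type w) [CommRing k] [Linear k C] : Prop :=
  (∀ X : C, IsNoetherianObject X) ∧ (∀ X : C, IsArtinianObject X) ∧
  (∀ X Y : C, IsFiniteLength k (X ⟶ Y)) ∧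
  (∃ (n : ℕ) (f : Fin n → C), ∀ X : C, Simple X → ∃ i, Nonempty (X ≅ f i))

namespace Character

variable (χ : Character C)

lemma zero_obj : χ.toFun 0 = 0 := by
  have h := χ.additive 0 0
    { pt := (0 : C), fst := 0, snd := 0, inl := 0, inr := 0,
      inl_fst := (isZero_zero C).eq_of_src _ _,
      inl_snd := (isZero_zero C).eq_of_src _ _,
      inr_fst := (isZero_zero C).eq_of_src _ _,
      inr_snd := (isZero_zero C).eq_of_src _ _ }
    (isBinaryBilimitOfTotal _ ((isZero_zero C).eq_of_src _ _))
  dsimp only at h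
  omega

lemma ofIso {A B : C} (e : A ≅ B) : χ.toFun A = χ.toFun B := by
  have h := χ.additive A 0
    { pt := B, fst := e.inv, snd := 0, inl := e.hom, inr := 0,
      inl_fst := e.hom_inv_id,
      inl_snd := by simp,
      inr_fst := (isZero_zero C).eq_of_src _ _,
      inr_snd := (isZero_zero C).eq_of_src _ _ }
    (isBinaryBilimitOfTotal _ (by simp))
  dsimp only at h
  rw [h, χ.zero_obj]
  omega

lemma biprod_obj (A B : C) : χ.toFun (A ⊞ B) = χ.toFun A + χ.toFun B :=
  χ.additive A B _ (BinaryBiproduct.isBilimit A B)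

lemma cokernel_pt_eq {A B : C} {f : A ⟶ B} (c : CokernelCofork f) (hc : IsColimit c) :
    χ.toFun (cokernel f) = χ.toFun c.pt := by
  have e : cokernel f ≅ c.pt := (cokernelIsCokernel f).coconePointUniqueUpToIso hc
  exact χ.ofIso e

lemma le_of_epi {A B : C} (p : A ⟶ B) [Epi p] : χ.toFun B ≤ χ.toFun A := by
  have h := χ.subadditive p _ (cokernelIsCokernel p)
  have h2 : χ.toFun (cokernel p) = 0 := by
    rw [χ.ofIso (cokernel.ofEpi p), χ.zero_obj]
  simp only [Cofork.ofπ_pt] at h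
  omega

lemma eval_nonneg {A B : C} (f : A ⟶ B) : 0 ≤ χ.eval f := by
  have h := χ.subadditive f _ (cokernelIsCokernel f)
  simp only [Cofork.ofπ_pt] at h
  unfold eval
  omega

lemma eval_le {A B : C} (f : A ⟶ B) : χ.eval f ≤ χ.toFun A := by
  have h : χ.toFun (cokernel f) ≤ χ.toFun B := χ.le_of_epi (cokernel.π f)
  unfold eval
  omega

lemma eval_epi {A B : C} (p : A ⟶ B) [Epi p] :
    χ.eval p = (χ.toFun A : ℤ) - χ.toFun B := by
  have h2 : χ.toFun (cokernel p) = 0 := by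
    rw [χ.ofIso (cokernel.ofEpi p), χ.zero_obj]
  unfold eval
  rw [h2]
  push_cast
  ring

lemma eval_id (A : C) : χ.eval (𝟙 A) = 0 := by
  rw [χ.eval_epi (𝟙 A)]; ring


lemma eval_epi_comp {A B Z : C} (q : A ⟶ B) [Epi q] (d : B ⟶ Z) :
    χ.eval (q ≫ d) = χ.eval q + χ.eval d := by
  have h : χ.toFun (cokernel (q ≫ d)) = χ.toFun (cokernel d) := χ.ofIso (cokernelEpiComp q d)
  have h2 := χ.eval_epi q
  unfold eval at *
  omega

/-- The cokernel of `biprod.lift v (cokernel.π u)` is the cokernel of `u ≫ v`. -/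
lemma cokernel_lift_comp {A Y Z : C} (u : A ⟶ Y) (v : Y ⟶ Z) :
    χ.toFun (cokernel (biprod.lift v (cokernel.π u))) = χ.toFun (cokernel (u ≫ v)) := by
  have hu : u ≫ v ≫ cokernel.π (u ≫ v) = 0 := by
    rw [← Category.assoc, cokernel.condition]
  set t : cokernel u ⟶ cokernel (u ≫ v) := cokernel.desc u (v ≫ cokernel.π (u ≫ v)) hu with ht
  have hπt : cokernel.π u ≫ t = v ≫ cokernel.π (u ≫ v) := cokernel.π_desc _ _ _
  have hφcond : biprod.lift v (cokernel.π u) ≫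
      biprod.desc (cokernel.π (u ≫ v)) (-t) = 0 := by
    rw [biprod.lift_desc, Preadditive.comp_neg, hπt]
    simp
  have hcol : IsColimit (CokernelCofork.ofπ _ hφcond) := by
    refine CokernelCofork.IsColimit.ofπ _ _
      (fun {W} g' hg' => cokernel.desc (u ≫ v) (biprod.inl ≫ g') ?_) ?_ ?_
    · -- (u ≫ v) ≫ biprod.inl ≫ g' = 0
      have key : v ≫ (biprod.inl ≫ g') + cokernel.π u ≫ (biprod.inr ≫ g') = 0 := by
        simpa [biprod.lift_eq, Preadditive.add_comp, Category.assoc] using hg'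
      have k2 : v ≫ (biprod.inl ≫ g') = -(cokernel.π u ≫ (biprod.inr ≫ g')) :=
        eq_neg_of_add_eq_zero_left key
      rw [Category.assoc, k2]
      rw [Preadditive.comp_neg, ← Category.assoc, cokernel.condition, zero_comp, neg_zero]
    · intro W g' hg'
      have key : v ≫ (biprod.inl ≫ g') + cokernel.π u ≫ (biprod.inr ≫ g') = 0 := by
        simpa [biprod.lift_eq, Preadditive.add_comp, Category.assoc] using hg'
      apply biprod.hom_ext'
      · rw [← Category.assoc, biprod.inl_desc, cokernel.π_desc]
      · rw [← Category.assoc, biprod.inr_desc, ← cancel_epi (cokernel.π u)]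
        have k2 : -(v ≫ (biprod.inl ≫ g')) = cokernel.π u ≫ (biprod.inr ≫ g') :=
          neg_eq_of_add_eq_zero_right key
        rw [Preadditive.neg_comp, Preadditive.comp_neg, ← Category.assoc, hπt, Category.assoc,
          cokernel.π_desc, ← k2]
    · intro W g' hg' m hm
      rw [← cancel_epi (cokernel.π (u ≫ v)), cokernel.π_desc]
      have : biprod.inl ≫ biprod.desc (cokernel.π (u ≫ v)) (-t) = cokernel.π (u ≫ v) :=
        biprod.inl_desc _ _
      rw [← this, Category.assoc, hm]
  exact χ.cokernel_pt_eq _ hcol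

/-- Lemma B: evaluation is additive along compositions, with explicit correction morphism. -/
lemma eval_comp {A Y Z : C} (u : A ⟶ Y) (v : Y ⟶ Z) :
    χ.eval (u ≫ v) = χ.eval u + χ.eval (biprod.lift v (cokernel.π u)) := by
  have h := χ.cokernel_lift_comp u v
  have hb := χ.biprod_obj Z (cokernel u)
  unfold eval
  rw [hb] at *
  push_cast
  omega

lemma eval_comp_le {A Y Z : C} (u : A ⟶ Y) (v : Y ⟶ Z) :
    χ.eval u ≤ χ.eval (u ≫ v) := by
  have h := χ.eval_comp u v
  have h2 := χ.eval_nonneg (biprod.lift v (cokernel.π u))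
  omega

/-- The cokernel of `biprod.map a d` computes as a biproduct of cokernels. -/
lemma cokernel_map {A W B Z : C} (a : A ⟶ W) (d : B ⟶ Z) :
    χ.toFun (cokernel (biprod.map a d)) =
      χ.toFun (cokernel a) + χ.toFun (cokernel d) := by
  have hcond : biprod.map a d ≫ biprod.map (cokernel.π a) (cokernel.π d) = 0 := by
    apply biprod.hom_ext
    · simp [cokernel.condition]
    · simp [cokernel.condition]
  have hcol : IsColimit (CokernelCofork.ofπ _ hcond) := by
    refine CokernelCofork.IsColimit.ofπ _ _
      (fun {T} g' hg' => biprod.desc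
        (cokernel.desc a (biprod.inl ≫ g') ?_) (cokernel.desc d (biprod.inr ≫ g') ?_)) ?_ ?_
    · rw [← Category.assoc, ← biprod.inl_map, Category.assoc, hg', comp_zero]
    · rw [← Category.assoc, ← biprod.inr_map, Category.assoc, hg', comp_zero]
    · intro T g' hg'
      apply biprod.hom_ext'
      · rw [← Category.assoc, biprod.inl_map, Category.assoc, biprod.inl_desc, cokernel.π_desc]
      · rw [← Category.assoc, biprod.inr_map, Category.assoc, biprod.inr_desc, cokernel.π_desc]
    · intro T g' hg' m hm
      apply biprod.hom_ext'
      · rw [biprod.inl_desc, ← cancel_epi (cokernel.π a), cokernel.π_desc,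
          ← Category.assoc, ← biprod.inl_map, Category.assoc, hm]
      · rw [biprod.inr_desc, ← cancel_epi (cokernel.π d), cokernel.π_desc,
          ← Category.assoc, ← biprod.inr_map, Category.assoc, hm]
  rw [χ.cokernel_pt_eq _ hcol]
  exact χ.biprod_obj _ _

lemma eval_map {A W B Z : C} (a : A ⟶ W) (d : B ⟶ Z) :
    χ.eval (biprod.map a d) = χ.eval a + χ.eval d := by
  have h := χ.cokernel_map a d
  have h1 := χ.biprod_obj A B
  have h2 := χ.biprod_obj W Z
  unfold eval
  rw [h, h1, h2]
  push_cast
  omega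

end Character

/-- Pushout of `a : A ⟶ W` along `f : A ⟶ B`, realized as a cokernel. -/
noncomputable abbrev pushP {A W B : C} (a : A ⟶ W) (f : A ⟶ B) : C :=
  cokernel (biprod.lift a (-f))

noncomputable def pushInl {A W B : C} (a : A ⟶ W) (f : A ⟶ B) : W ⟶ pushP a f :=
  biprod.inl ≫ cokernel.π _

noncomputable def pushInr {A W B : C} (a : A ⟶ W) (f : A ⟶ B) : B ⟶ pushP a f :=
  biprod.inr ≫ cokernel.π _

lemma lift_comp {X W B T : C} (x : X ⟶ W) (y : X ⟶ B) (g : W ⊞ B ⟶ T) :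
    biprod.lift x y ≫ g = x ≫ (biprod.inl ≫ g) + y ≫ (biprod.inr ≫ g) := by
  rw [biprod.lift_eq, Preadditive.add_comp, Category.assoc, Category.assoc]

lemma push_comm {A W B : C} (a : A ⟶ W) (f : A ⟶ B) :
    a ≫ pushInl a f = f ≫ pushInr a f := by
  have h := cokernel.condition (biprod.lift a (-f))
  rw [lift_comp, Preadditive.neg_comp] at h
  have h2 : a ≫ pushInl a f + -(f ≫ pushInr a f) = 0 := h
  have h3 : a ≫ pushInl a f - f ≫ pushInr a f = 0 := by rw [sub_eq_add_neg]; exact h2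
  exact sub_eq_zero.mp h3

namespace Character
variable (χ : Character C)

lemma cokernel_pushInr {A W B : C} (a : A ⟶ W) (f : A ⟶ B) :
    χ.toFun (cokernel (pushInr a f)) = χ.toFun (cokernel a) := by
  have hcond0 : biprod.lift a (-f) ≫ biprod.desc (cokernel.π a) 0 = 0 := by
    rw [biprod.lift_desc]; simp
  set ρ : pushP a f ⟶ cokernel a := cokernel.desc _ _ hcond0 with hρ
  have hπρ : cokernel.π (biprod.lift a (-f)) ≫ ρ = biprod.desc (cokernel.π a) 0 :=
    cokernel.π_desc _ _ _
  have hfacρ : pushInl a f ≫ ρ = cokernel.π a := by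
    unfold pushInl; rw [Category.assoc, hπρ, biprod.inl_desc]
  haveI hepi : Epi ρ := epi_of_epi_fac hfacρ
  have hcond : pushInr a f ≫ ρ = 0 := by
    unfold pushInr; rw [Category.assoc, hπρ, biprod.inr_desc]
  have hcol : IsColimit (CokernelCofork.ofπ ρ hcond) := by
    refine CokernelCofork.IsColimit.ofπ' ρ hcond (fun {T} k hk => ?_)
    have hak : a ≫ (pushInl a f ≫ k) = 0 := by
      rw [← Category.assoc, push_comm, Category.assoc, hk, comp_zero]
    refine ⟨cokernel.desc a (pushInl a f ≫ k) hak, ?_⟩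
    rw [← cancel_epi (cokernel.π (biprod.lift a (-f))), ← Category.assoc, hπρ]
    apply biprod.hom_ext'
    · rw [← Category.assoc, biprod.inl_desc, cokernel.π_desc]
      unfold pushInl
      rw [Category.assoc]
    · rw [← Category.assoc, biprod.inr_desc, zero_comp]
      have : biprod.inr ≫ cokernel.π (biprod.lift a (-f)) ≫ k = pushInr a f ≫ k := by
        unfold pushInr; rw [Category.assoc]
      rw [this, hk]
  exact χ.cokernel_pt_eq _ hcol

lemma eval_push {A W B : C} (a : A ⟶ W) (f : A ⟶ B) :
    χ.eval a = χ.eval (pushInr a f) + χ.eval (biprod.lift a f) := by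
  have hθ : biprod.lift a f ≫ biprod.map (𝟙 W) (-𝟙 B) = biprod.lift a (-f) := by
    apply biprod.hom_ext <;> simp
  haveI : IsIso (biprod.map (𝟙 W) (-𝟙 B)) := by
    refine ⟨biprod.map (𝟙 W) (-𝟙 B), ?_, ?_⟩ <;> (apply biprod.hom_ext' <;> simp)
  have hP : χ.toFun (pushP a f) = χ.toFun (cokernel (biprod.lift a f)) :=
    calc χ.toFun (pushP a f)
        = χ.toFun (cokernel (biprod.lift a f ≫ biprod.map (𝟙 W) (-𝟙 B))) :=
          χ.ofIso (cokernelIsoOfEq hθ).symm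
      _ = χ.toFun (cokernel (biprod.lift a f)) := χ.ofIso (cokernelCompIsIso _ _)
  have h1 := χ.cokernel_pushInr a f
  have hb := χ.biprod_obj W B
  unfold eval
  rw [h1, hb, hP]
  push_cast
  omega

lemma pushInr_step {A W W' B : C} (a : A ⟶ W) (u : W ⟶ W') (f : A ⟶ B) :
    ∃ k : pushP a f ⟶ pushP (a ≫ u) f, pushInr (a ≫ u) f = pushInr a f ≫ k := by
  have hlift : biprod.lift a (-f) ≫ biprod.map u (𝟙 B) = biprod.lift (a ≫ u) (-f) := by
    apply biprod.hom_ext <;> simp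
  have hcond : biprod.lift a (-f) ≫
      (biprod.map u (𝟙 B) ≫ cokernel.π (biprod.lift (a ≫ u) (-f))) = 0 := by
    rw [← Category.assoc, hlift, cokernel.condition]
  refine ⟨cokernel.desc _ _ hcond, ?_⟩
  unfold pushInr
  rw [Category.assoc, cokernel.π_desc, ← Category.assoc, biprod.inr_map, Category.assoc,
    Category.id_comp]

lemma pushInr_fac {A W B Q : C} (a : A ⟶ W) (f : A ⟶ B) (q : B ⟶ Q) (hfq : f ≫ q = 0) :
    ∃ t : pushP a f ⟶ Q, pushInr a f ≫ t = q := by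
  have hcond : biprod.lift a (-f) ≫ biprod.desc 0 q = 0 := by
    rw [biprod.lift_desc]; simp [hfq]
  refine ⟨cokernel.desc _ _ hcond, ?_⟩
  unfold pushInr
  rw [Category.assoc, cokernel.π_desc, biprod.inr_desc]

lemma cokernel_pushR {A B Y Q : C} {f : A ⟶ B} (q : B ⟶ Q) (hfq : f ≫ q = 0)
    (hc : IsColimit (CokernelCofork.ofπ q hfq)) (cc : B ⟶ Y) :
    χ.toFun (cokernel (f ≫ cc)) = χ.toFun (pushP cc q) := by
  haveI hq : Epi q := epi_of_isColimit_cofork hc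
  have hcond : (f ≫ cc) ≫ pushInl cc q = 0 := by
    rw [Category.assoc, push_comm, ← Category.assoc, hfq, zero_comp]
  haveI hepi : Epi (pushInl cc q) := by
    constructor
    intro T x y h
    have h2 : pushInr cc q ≫ x = pushInr cc q ≫ y := by
      rw [← cancel_epi q, ← Category.assoc, ← push_comm, Category.assoc, h, ← Category.assoc,
        push_comm, Category.assoc]
    have h3 : cokernel.π (biprod.lift cc (-q)) ≫ x = cokernel.π (biprod.lift cc (-q)) ≫ y := by
      apply biprod.hom_ext'
      · simpa [pushInl, Category.assoc] using h
      · simpa [pushInr, Category.assoc] using h2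
    exact (cancel_epi _).mp h3
  have hcol : IsColimit (CokernelCofork.ofπ _ hcond) := by
    refine CokernelCofork.IsColimit.ofπ' _ _ (fun {T} k hk => ?_)
    obtain ⟨τ, hτ⟩ := CokernelCofork.IsColimit.desc' hc (cc ≫ k)
      (by rw [← Category.assoc, hk])
    simp only [Cofork.π_ofπ] at hτ
    have hcond2 : biprod.lift cc (-q) ≫ biprod.desc k τ = 0 := by
      rw [biprod.lift_desc, Preadditive.neg_comp, hτ]
      simp
    refine ⟨cokernel.desc _ _ hcond2, ?_⟩
    unfold pushInl
    rw [Category.assoc, cokernel.π_desc, biprod.inl_desc]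
  exact χ.cokernel_pt_eq _ hcol

lemma eval_split_identity {A B Y Q : C} {f : A ⟶ B} (q : B ⟶ Q) (hfq : f ≫ q = 0)
    (hc : IsColimit (CokernelCofork.ofπ q hfq)) (cc : B ⟶ Y) :
    χ.eval (f ≫ cc) + χ.eval (pushInr cc q) =
      χ.eval cc + ((χ.toFun A : ℤ) + χ.toFun Q - χ.toFun B) := by
  have h1 := χ.cokernel_pushR q hfq hc cc
  have h2 := χ.cokernel_pushInr cc q
  unfold eval
  rw [h1, h2]
  push_cast
  omega

lemma eval_lift_le_right {A W B : C} (a : A ⟶ W) (f : A ⟶ B) :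
    χ.eval (biprod.lift a f) ≤ χ.eval f := by
  have h := χ.eval_comp_le (biprod.lift a f) biprod.snd
  rw [biprod.lift_snd] at h
  exact h

lemma eval_eq_cofork {A B : C} {f : A ⟶ B} (c : CokernelCofork f) (hc : IsColimit c) :
    χ.eval f = (χ.toFun A : ℤ) - χ.toFun B + χ.toFun c.pt := by
  unfold eval; rw [χ.cokernel_pt_eq c hc]

end Character

open Character

/-- Chains of composable morphisms out of `A`, counting strict increases of `χ.eval`
along the composites. -/
inductive Reach (χ : Character C) {A : C} : ∀ {Y : C}, (A ⟶ Y) → ℕ → Prop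
  | refl : Reach χ (𝟙 A) 0
  | flat {Y Z : C} {c : A ⟶ Y} {r : ℕ} (u : Y ⟶ Z) : Reach χ c r → Reach χ (c ≫ u) r
  | strict {Y Z : C} {c : A ⟶ Y} {r : ℕ} (u : Y ⟶ Z) : Reach χ c r →
      χ.eval c < χ.eval (c ≫ u) → Reach χ (c ≫ u) (r + 1)

lemma Reach.le_eval {χ : Character C} {A Y : C} {c : A ⟶ Y} {r : ℕ} (h : Reach χ c r) :
    (r : ℤ) ≤ χ.eval c := by
  induction h with
  | refl => rw [χ.eval_id]; simp
  | flat u hc ih => exact le_trans ih (χ.eval_comp_le _ u)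
  | strict u hc hlt ih => push_cast; omega

def phiSet (χ : Character C) (A : C) : Set ℕ :=
  {r | ∃ (Y : C) (c : A ⟶ Y), Reach χ c r}

lemma phiSet_nonempty (χ : Character C) (A : C) : (phiSet χ A).Nonempty :=
  ⟨0, A, 𝟙 A, Reach.refl⟩

lemma phiSet_bdd (χ : Character C) (A : C) : ∀ r ∈ phiSet χ A, r ≤ χ.toFun A := by
  rintro r ⟨Y, c, hc⟩
  have h1 := hc.le_eval
  have h2 := χ.eval_le c
  omega

noncomputable def phi (χ : Character C) (A : C) : ℕ :=
  sSup (phiSet χ A)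

lemma phi_mem (χ : Character C) (A : C) : phi χ A ∈ phiSet χ A :=
  Nat.sSup_mem (phiSet_nonempty χ A) ⟨χ.toFun A, phiSet_bdd χ A⟩

lemma le_phi {χ : Character C} {A : C} {r : ℕ} (h : r ∈ phiSet χ A) : r ≤ phi χ A :=
  le_csSup ⟨χ.toFun A, phiSet_bdd χ A⟩ h

lemma phi_le (χ : Character C) (A : C) : phi χ A ≤ χ.toFun A :=
  phiSet_bdd χ A _ (phi_mem χ A)

lemma Reach.precomp {χ : Character C} {A' A Y : C} {c : A ⟶ Y} {r : ℕ}
    (h : Reach χ c r) (e : A' ⟶ A) [IsIso e] : Reach χ (e ≫ c) r := by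
  have heval : ∀ {T : C} (m : A ⟶ T), χ.eval (e ≫ m) = χ.eval m := by
    intro T m
    rw [χ.eval_epi_comp e m, χ.eval_epi e, χ.ofIso (asIso e)]
    ring
  induction h with
  | refl =>
    rw [Category.comp_id]
    have := Reach.flat (χ := χ) e (Reach.refl)
    rwa [Category.id_comp] at this
  | flat u hc ih =>
    rw [← Category.assoc]
    exact Reach.flat u ih
  | strict u hc hlt ih =>
    rw [← Category.assoc]
    refine Reach.strict u ih ?_
    rw [Category.assoc, heval, heval]
    exact hlt

lemma phi_iso (χ : Character C) {A B : C} (e : A ≅ B) : phi χ A = phi χ B := by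
  apply le_antisymm
  · obtain ⟨Y, c, hc⟩ := phi_mem χ A
    exact le_phi ⟨Y, e.inv ≫ c, hc.precomp e.inv⟩
  · obtain ⟨Y, c, hc⟩ := phi_mem χ B
    exact le_phi ⟨Y, e.hom ≫ c, hc.precomp e.hom⟩

lemma biprod_map_comp {A W W' B Z Z' : C} (a : A ⟶ W) (u : W ⟶ W') (d : B ⟶ Z) (v : Z ⟶ Z') :
    biprod.map (a ≫ u) (d ≫ v) = biprod.map a d ≫ biprod.map u v := by
  apply biprod.hom_ext <;> simp

lemma Reach.map_id {χ : Character C} {A W : C} {a : A ⟶ W} {r : ℕ} (B : C)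
    (h : Reach χ a r) : Reach χ (biprod.map a (𝟙 B)) r := by
  induction h with
  | refl =>
    have he : biprod.map (𝟙 A) (𝟙 B) = 𝟙 (A ⊞ B) := by apply biprod.hom_ext <;> simp
    rw [he]; exact Reach.refl
  | flat u hc ih =>
    rename_i Y Z c r'
    have he : biprod.map (c ≫ u) (𝟙 B) = biprod.map c (𝟙 B) ≫ biprod.map u (𝟙 B) := by
      rw [← biprod_map_comp, Category.comp_id]
    rw [he]; exact Reach.flat _ ih
  | strict u hc hlt ih =>
    rename_i Y Z c r'
    have he : biprod.map (c ≫ u) (𝟙 B) = biprod.map c (𝟙 B) ≫ biprod.map u (𝟙 B) := by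
      rw [← biprod_map_comp, Category.comp_id]
    rw [he]
    refine Reach.strict _ ih ?_
    rw [← he, χ.eval_map, χ.eval_map, χ.eval_id]
    omega

lemma Reach.concat {χ : Character C} {A W B Z : C} {a : A ⟶ W} {d : B ⟶ Z} {r s : ℕ}
    (ha : Reach χ a r) (hd : Reach χ d s) : Reach χ (biprod.map a d) (r + s) := by
  induction hd with
  | refl => exact ha.map_id B
  | flat u hc ih =>
    rename_i Y' Z' c s'
    have he : biprod.map a (c ≫ u) = biprod.map a c ≫ biprod.map (𝟙 W) u := by
      rw [← biprod_map_comp, Category.comp_id]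
    rw [he]; exact Reach.flat _ ih
  | strict u hc hlt ih =>
    rename_i Y' Z' c s'
    have he : biprod.map a (c ≫ u) = biprod.map a c ≫ biprod.map (𝟙 W) u := by
      rw [← biprod_map_comp, Category.comp_id]
    rw [show r + (s' + 1) = (r + s') + 1 by omega, he]
    refine Reach.strict _ ih ?_
    rw [← he, χ.eval_map, χ.eval_map]
    omega

/-- Splitting a chain on `B` along a right-exact sequence `A → B → Q → 0`. -/
lemma Reach.split {χ : Character C} {A B Q : C} (f : A ⟶ B) (q : B ⟶ Q) (hfq : f ≫ q = 0)
    (hq : IsColimit (CokernelCofork.ofπ q hfq)) {Y : C} {cc : B ⟶ Y} {r : ℕ}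
    (h : Reach χ cc r) :
    ∃ rA rQ, r ≤ rA + rQ ∧ Reach χ (f ≫ cc) rA ∧ Reach χ (pushInr cc q) rQ := by
  induction h with
  | refl =>
    refine ⟨0, 0, le_refl 0, ?_, ?_⟩
    · rw [Category.comp_id]
      have := Reach.flat (χ := χ) f (Reach.refl)
      rwa [Category.id_comp] at this
    · have := Reach.flat (χ := χ) (pushInr (𝟙 B) q) (Reach.refl)
      rwa [Category.id_comp] at this
  | flat u hc ih =>
    obtain ⟨rA, rQ, hle, hA, hQ⟩ := ih
    obtain ⟨k, hk⟩ := pushInr_step _ u q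
    refine ⟨rA, rQ, hle, ?_, ?_⟩
    · rw [← Category.assoc]; exact Reach.flat u hA
    · rw [hk]; exact Reach.flat k hQ
  | strict u hc hlt ih =>
    rename_i Y' Z' c r'
    obtain ⟨rA, rQ, hle, hA, hQ⟩ := ih
    obtain ⟨k, hk⟩ := pushInr_step c u q
    have id1 := χ.eval_split_identity q hfq hq c
    have id2 := χ.eval_split_identity q hfq hq (c ≫ u)
    have monoA : χ.eval (f ≫ c) ≤ χ.eval (f ≫ (c ≫ u)) := by
      rw [← Category.assoc]; exact χ.eval_comp_le (f ≫ c) u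
    have monoQ : χ.eval (pushInr c q) ≤ χ.eval (pushInr (c ≫ u) q) := by
      rw [hk]; exact χ.eval_comp_le _ k
    rcases lt_or_ge (χ.eval (f ≫ c)) (χ.eval (f ≫ (c ≫ u))) with hA' | hA'
    · refine ⟨rA + 1, rQ, by omega, ?_, ?_⟩
      · have : Reach χ ((f ≫ c) ≫ u) (rA + 1) := Reach.strict u hA (by rwa [Category.assoc])
        rwa [Category.assoc] at this
      · rw [hk]; exact Reach.flat k hQ
    · refine ⟨rA, rQ + 1, by omega, ?_, ?_⟩
      · rw [← Category.assoc]; exact Reach.flat u hA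
      · have hQ' : χ.eval (pushInr c q) < χ.eval (pushInr c q ≫ k) := by
          rw [← hk]; omega
        have : Reach χ (pushInr c q ≫ k) (rQ + 1) := Reach.strict k hQ hQ'
        rwa [← hk] at this

/-- Pushing a chain on `A` forward along `f : A ⟶ B` (with quantitative loss `χ(lift a f)`). -/
lemma Reach.pushChain {χ : Character C} {A B W : C} (f : A ⟶ B) {a : A ⟶ W} {rA : ℕ}
    (h : Reach χ a rA) :
    ∃ rg, Reach χ (pushInr a f) rg ∧ (rA : ℤ) ≤ rg + χ.eval (biprod.lift a f) := by
  induction h with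
  | refl =>
    refine ⟨0, ?_, by simpa using χ.eval_nonneg (biprod.lift (𝟙 A) f)⟩
    have := Reach.flat (χ := χ) (pushInr (𝟙 A) f) (Reach.refl)
    rwa [Category.id_comp] at this
  | flat u hc ih =>
    rename_i Y' Z' c r'
    obtain ⟨rg, hg, hbd⟩ := ih
    obtain ⟨k, hk⟩ := pushInr_step c u f
    have hliftc : biprod.lift (c ≫ u) f = biprod.lift c f ≫ biprod.map u (𝟙 B) := by
      apply biprod.hom_ext <;> simp
    have monoL : χ.eval (biprod.lift c f) ≤ χ.eval (biprod.lift (c ≫ u) f) := by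
      rw [hliftc]; exact χ.eval_comp_le _ _
    exact ⟨rg, by rw [hk]; exact Reach.flat k hg, by omega⟩
  | strict u hc hlt ih =>
    rename_i Y' Z' c r'
    obtain ⟨rg, hg, hbd⟩ := ih
    obtain ⟨k, hk⟩ := pushInr_step c u f
    have hliftc : biprod.lift (c ≫ u) f = biprod.lift c f ≫ biprod.map u (𝟙 B) := by
      apply biprod.hom_ext <;> simp
    have monoL : χ.eval (biprod.lift c f) ≤ χ.eval (biprod.lift (c ≫ u) f) := by
      rw [hliftc]; exact χ.eval_comp_le _ _
    have monoG : χ.eval (pushInr c f) ≤ χ.eval (pushInr (c ≫ u) f) := by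
      rw [hk]; exact χ.eval_comp_le _ k
    have id1 := χ.eval_push c f
    have id2 := χ.eval_push (c ≫ u) f
    rcases lt_or_ge (χ.eval (pushInr c f)) (χ.eval (pushInr (c ≫ u) f)) with hG | hG
    · refine ⟨rg + 1, ?_, by push_cast; omega⟩
      have : Reach χ (pushInr c f ≫ k) (rg + 1) := Reach.strict k hg (by rwa [← hk])
      rwa [← hk] at this
    · exact ⟨rg, by rw [hk]; exact Reach.flat k hg, by push_cast; omega⟩

/-- Appending a chain on the cokernel to a chain reaching `q`. -/
lemma Reach.appendCofork {χ : Character C} {B Q P : C} (q : B ⟶ Q) [Epi q]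
    {g : B ⟶ P} {rg : ℕ} (hg : Reach χ g rg) (t : P ⟶ Q) (hgt : g ≫ t = q)
    {Z : C} {d : Q ⟶ Z} {s : ℕ} (hd : Reach χ d s) :
    ∃ r', rg + s ≤ r' ∧ Reach χ (q ≫ d) r' := by
  induction hd with
  | refl =>
    refine ⟨rg, by omega, ?_⟩
    rw [Category.comp_id, ← hgt]
    exact Reach.flat t hg
  | flat u hc ih =>
    obtain ⟨r', hle, hr⟩ := ih
    refine ⟨r', by omega, ?_⟩
    rw [← Category.assoc]
    exact Reach.flat u hr
  | strict u hc hlt ih =>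
    rename_i Y' Z' d' s'
    obtain ⟨r', hle, hr⟩ := ih
    refine ⟨r' + 1, by omega, ?_⟩
    have heval1 := χ.eval_epi_comp q d'
    have heval2 := χ.eval_epi_comp q (d' ≫ u)
    have : Reach χ ((q ≫ d') ≫ u) (r' + 1) := by
      refine Reach.strict u hr ?_
      rw [Category.assoc, heval1, heval2]
      omega
    rwa [Category.assoc] at this

/-- Subadditivity of `phi`. -/
lemma phi_subadd (χ : Character C) {A B : C} (f : A ⟶ B) (c : CokernelCofork f)
    (hc : IsColimit c) : phi χ B ≤ phi χ A + phi χ c.pt := by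
  have hc' : IsColimit (CokernelCofork.ofπ c.π c.condition) :=
    IsColimit.ofIsoColimit hc (isoOfπ c)
  obtain ⟨Y, cc, hcc⟩ := phi_mem χ B
  obtain ⟨rA, rQ, hle, hA, hQ⟩ := hcc.split f c.π c.condition hc'
  have h1 : rA ≤ phi χ A := le_phi ⟨_, _, hA⟩
  have h2 : rQ ≤ phi χ c.pt := le_phi ⟨_, _, hQ⟩
  omega

/-- Superadditivity of `phi` with defect `χ.eval f`. -/
lemma phi_superadd (χ : Character C) {A B : C} (f : A ⟶ B) (c : CokernelCofork f)
    (hc : IsColimit c) :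
    (phi χ A : ℤ) + phi χ c.pt ≤ phi χ B + χ.eval f := by
  have hc' : IsColimit (CokernelCofork.ofπ c.π c.condition) :=
    IsColimit.ofIsoColimit hc (isoOfπ c)
  haveI : Epi c.π := epi_of_isColimit_cofork hc
  obtain ⟨W, a, ha⟩ := phi_mem χ A
  obtain ⟨Z, d, hd⟩ := phi_mem χ c.pt
  obtain ⟨rg, hg, hbd⟩ := ha.pushChain f
  obtain ⟨t, ht⟩ := pushInr_fac a f c.π c.condition
  obtain ⟨r', hle, hr⟩ := hg.appendCofork c.π t ht hd
  have h1 : r' ≤ phi χ B := le_phi ⟨_, _, hr⟩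
  have h2 : χ.eval (biprod.lift a f) ≤ χ.eval f := χ.eval_lift_le_right a f
  omega

noncomputable def biprodSnd_isColimit (X Y : C) :
    IsColimit (CokernelCofork.ofπ (biprod.snd : X ⊞ Y ⟶ Y) biprod.inl_snd) := by
  haveI : Epi (biprod.snd : X ⊞ Y ⟶ Y) := epi_of_epi_fac biprod.inr_snd
  refine CokernelCofork.IsColimit.ofπ' _ _ (fun {T} k hk => ⟨biprod.inr ≫ k, ?_⟩)
  have htot := biprod.total (X := X) (Y := Y)
  have hs : (biprod.snd ≫ biprod.inr : X ⊞ Y ⟶ _) ≫ k =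
      ((𝟙 (X ⊞ Y)) - biprod.fst ≫ biprod.inl) ≫ k := by
    rw [eq_sub_of_add_eq' htot]
  rw [← Category.assoc, hs, Preadditive.sub_comp, Category.id_comp, Category.assoc, hk,
    comp_zero, sub_zero]

lemma phi_biprod (χ : Character C) (X Y : C) : phi χ (X ⊞ Y) = phi χ X + phi χ Y := by
  apply le_antisymm
  · obtain ⟨T, cc, hcc⟩ := phi_mem χ (X ⊞ Y)
    obtain ⟨rA, rQ, hle, hA, hQ⟩ := hcc.split biprod.inl biprod.snd biprod.inl_snd
      (biprodSnd_isColimit X Y)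
    have h1 : rA ≤ phi χ X := le_phi ⟨_, _, hA⟩
    have h2 : rQ ≤ phi χ Y := le_phi ⟨_, _, hQ⟩
    omega
  · obtain ⟨W, a, ha⟩ := phi_mem χ X
    obtain ⟨Z, d, hd⟩ := phi_mem χ Y
    exact le_phi ⟨_, _, ha.concat hd⟩

noncomputable def phiChar (χ : Character C) : Character C where
  toFun := phi χ
  additive := fun X Y b hb => by
    have e : b.pt ≅ X ⊞ Y :=
      IsLimit.conePointUniqueUpToIso hb.isLimit (BinaryBiproduct.isBilimit X Y).isLimit
    rw [phi_iso χ e, phi_biprod]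
  subadditive := fun X Y f c hc => phi_subadd χ f c hc

noncomputable def psiChar (χ : Character C) : Character C where
  toFun A := χ.toFun A - phi χ A
  additive := fun X Y b hb => by
    have h1 := χ.additive X Y b hb
    have h2 := (phiChar χ).additive X Y b hb
    simp only [phiChar] at h2
    have l1 := phi_le χ X
    have l2 := phi_le χ Y
    omega
  subadditive := fun X Y f c hc => by
    have h1 := χ.subadditive f c hc
    have h2 := phi_superadd χ f c hc
    have l1 := phi_le χ X
    have l2 := phi_le χ Y
    have l3 := phi_le χ c.pt
    have he : χ.eval f = (χ.toFun X : ℤ) - χ.toFun Y + χ.toFun c.pt := χ.eval_eq_cofork c hc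
    rw [he] at h2
    omega

lemma phi_pos {χ : Character C} {B : C} (hB : χ.toFun B ≠ 0) : 1 ≤ phi χ B := by
  have hcoker : χ.toFun (cokernel (0 : B ⟶ (0 : C))) = 0 := by
    rw [χ.ofIso (cokernelZeroIsoTarget), χ.zero_obj]
  have heval : χ.eval (0 : B ⟶ (0 : C)) = χ.toFun B := by
    unfold Character.eval
    rw [hcoker, χ.zero_obj]
    push_cast
    ring
  have hstrict : χ.eval (𝟙 B) < χ.eval ((𝟙 B) ≫ (0 : B ⟶ (0 : C))) := by
    rw [Category.id_comp, heval, χ.eval_id]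
    omega
  have hr : Reach χ ((𝟙 B) ≫ (0 : B ⟶ (0 : C))) 1 := Reach.strict _ Reach.refl hstrict
  exact le_phi ⟨_, _, hr⟩

lemma phi_eq_of_irreducible {χ : Character C} (hχ : χ.IsIrreducible) (A : C) :
    phi χ A = χ.toFun A := by
  by_contra hne
  apply hχ.2
  refine ⟨phiChar χ, psiChar χ, ?_, ?_, ?_⟩
  · obtain ⟨B, hB⟩ := Function.ne_iff.mp hχ.1
    have hpos := phi_pos (χ := χ) (B := B) (by simpa using hB)
    refine Function.ne_iff.mpr ⟨B, ?_⟩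
    simp only [phiChar, Pi.zero_apply]
    omega
  · have l := phi_le χ A
    refine Function.ne_iff.mpr ⟨A, ?_⟩
    simp only [psiChar, Pi.zero_apply]
    omega
  · intro X
    have l := phi_le χ X
    simp only [phiChar, psiChar]
    omega

/-- Certificate extraction: a chain with `r` strict steps yields a finite list of morphisms
whose non-vanishing (for any character) certifies `r ≤ χ'.eval c`. -/
lemma Reach.certificate {χ : Character C} {A Y : C} {c : A ⟶ Y} {r : ℕ} (h : Reach χ c r) :
    ∃ L : List ((U : C) × (V : C) × (U ⟶ V)), L.length = r ∧
      (∀ w ∈ L, χ.eval w.2.2 ≠ 0) ∧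
      ∀ χ' : Character C, (∀ w ∈ L, χ'.eval w.2.2 ≠ 0) → (r : ℤ) ≤ χ'.eval c := by
  induction h with
  | refl =>
    refine ⟨[], rfl, by simp, fun χ' _ => by rw [χ'.eval_id]; simp⟩
  | flat u hc ih =>
    obtain ⟨L, hlen, hnz, hsound⟩ := ih
    exact ⟨L, hlen, hnz, fun χ' hz => le_trans (hsound χ' hz) (χ'.eval_comp_le _ u)⟩
  | strict u hc hlt ih =>
    rename_i Y' Z' cc r'
    obtain ⟨L, hlen, hnz, hsound⟩ := ih
    refine ⟨⟨Y', Z' ⊞ cokernel cc, biprod.lift u (cokernel.π cc)⟩ :: L, by simp [hlen], ?_, ?_⟩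
    · intro w hw
      rcases List.mem_cons.mp hw with hw | hw
      · subst hw
        dsimp only
        have hcomp := χ.eval_comp cc u
        omega
      · exact hnz w hw
    · intro χ' hz
      have h1 := hsound χ' (fun w hw => hz w (List.mem_cons_of_mem _ hw))
      have h2 : χ'.eval (biprod.lift u (cokernel.π cc)) ≠ 0 :=
        hz ⟨Y', Z' ⊞ cokernel cc, biprod.lift u (cokernel.π cc)⟩ List.mem_cons_self
      have h3 := χ'.eval_nonneg (biprod.lift u (cokernel.π cc))
      have h4 := χ'.eval_comp cc u
      push_cast
      omega

/-- An iterated biproduct of a finite family. -/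
noncomputable def sumObj : (m : ℕ) → (Fin m → C) → C
  | 0, _ => 0
  | (m + 1), f => f 0 ⊞ sumObj m (fun i => f i.succ)

lemma char_sumObj (χ' : Character C) : ∀ (m : ℕ) (f : Fin m → C),
    χ'.toFun (sumObj m f) = ∑ i, χ'.toFun (f i)
  | 0, f => by
    rw [show sumObj 0 f = 0 from rfl, χ'.zero_obj]
    simp
  | (m + 1), f => by
    rw [show sumObj (m + 1) f = (f 0 ⊞ sumObj m (fun i => f i.succ)) from rfl,
      χ'.biprod_obj, char_sumObj χ' m, Fin.sum_univ_succ]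


lemma generateOpen_certificates (L : List ((U : C) × (V : C) × (U ⟶ V))) :
    TopologicalSpace.GenerateOpen (spBasis C) {χ' : Sp C | ∀ w ∈ L, χ'.1.eval w.2.2 ≠ 0} := by
  induction L with
  | nil =>
    have h : {χ' : Sp C | ∀ w ∈ ([] : List ((U : C) × (V : C) × (U ⟶ V))), χ'.1.eval w.2.2 ≠ 0}
        = Set.univ := by
      ext χ'; simp
    rw [h]
    exact TopologicalSpace.GenerateOpen.univ
  | cons w T ih =>
    have h : {χ' : Sp C | ∀ v ∈ w :: T, χ'.1.eval v.2.2 ≠ 0} =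
        {χ' : Sp C | χ'.1.eval w.2.2 ≠ 0} ∩ {χ' : Sp C | ∀ v ∈ T, χ'.1.eval v.2.2 ≠ 0} := by
      ext χ'
      simp only [Set.mem_setOf_eq, Set.mem_inter_iff, List.mem_cons]
      constructor
      · intro hh; exact ⟨hh w (Or.inl rfl), fun v hv => hh v (Or.inr hv)⟩
      · rintro ⟨h1, h2⟩ v (rfl | hv)
        · exact h1
        · exact h2 v hv
    rw [h]
    exact TopologicalSpace.GenerateOpen.inter _ _
      (TopologicalSpace.GenerateOpen.basic _ ⟨w.1, w.2.1, w.2.2, rfl⟩) ih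

/-- For every `n ∈ ℕ`, the subset `V_n = {χ ∈ Sp C | deg χ ≤ n}` is closed in `Sp C`;
here `deg χ = ∑ᵢ χ(Sᵢ)` for a set of representatives `Sᵢ` of the isomorphism classes
of simple objects of `C`. -/
theorem statement2 (k : Type w) [CommRing k] (C : Type u) [Category.{v} C] [Abelian C]
    [Linear k C] (hC : LengthCategory C k)
    (ι : Type) [Fintype ι] (S : ι → C) (hS : ∀ i, Simple (S i))
    (hSrep : ∀ X : C, Simple X → ∃ i, Nonempty (X ≅ S i))
    (hSdistinct : ∀ i j, i ≠ j → IsEmpty (S i ≅ S j)) (n : ℕ) :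
    @IsClosed (Sp C) (spTopology C) {χ : Sp C | ∑ i, χ.1.toFun (S i) ≤ n} := by
  classical
  obtain ⟨e⟩ : Nonempty (ι ≃ Fin (Fintype.card ι)) := ⟨Fintype.equivFin ι⟩
  set X : C := sumObj (Fintype.card ι) (fun j => S (e.symm j)) with hX
  have hdeg : ∀ χ' : Character C, χ'.toFun X = ∑ i, χ'.toFun (S i) := by
    intro χ'
    rw [hX, char_sumObj]
    exact Equiv.sum_comp e.symm fun i => χ'.toFun (S i)
  letI : TopologicalSpace (Sp C) := spTopology C
  refine isOpen_compl_iff.mp ?_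
  have hmain : {χ : Sp C | ∑ i, χ.1.toFun (S i) ≤ n}ᶜ =
      ⋃₀ {O : Set (Sp C) | TopologicalSpace.GenerateOpen (spBasis C) O ∧
        O ⊆ {χ : Sp C | ∑ i, χ.1.toFun (S i) ≤ n}ᶜ} := by
    apply Set.Subset.antisymm
    · intro χ₀ hχ₀
      simp only [Set.mem_compl_iff, Set.mem_setOf_eq, not_le] at hχ₀
      have hdeg0 : n + 1 ≤ χ₀.1.toFun X := by
        have h0 := hdeg χ₀.1
        omega
      have hphi : phi χ₀.1 X = χ₀.1.toFun X := phi_eq_of_irreducible χ₀.2 X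
      obtain ⟨Y, c, hc⟩ := phi_mem χ₀.1 X
      obtain ⟨L, hlen, hnz, hsound⟩ := hc.certificate
      refine ⟨{χ' : Sp C | ∀ w ∈ L, χ'.1.eval w.2.2 ≠ 0},
        ⟨generateOpen_certificates L, ?_⟩, ?_⟩
      · intro χ' hχ'
        have h1 := hsound χ'.1 hχ'
        have h2 := χ'.1.eval_le c
        have h3 := hdeg χ'.1
        simp only [Set.mem_compl_iff, Set.mem_setOf_eq, not_le]
        omega
      · exact hnz
    · rintro χ' ⟨O, ⟨hO, hsub⟩, hmem⟩
      exact hsub hmem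
  rw [hmain]
  show TopologicalSpace.GenerateOpen (spBasis C) _
  exact TopologicalSpace.GenerateOpen.sUnion _ (fun O hO => hO.1)


end BrauerThrall
end

section
/- For every n ∈ ℕ, the subset V_n = {χ ∈ Sp C | deg χ ≤ n} is compact in Sp C. -/
open CategoryTheory CategoryTheory.Limits ZeroObject

universe w v u

namespace BrauerThrall

variable {D : Type u} [Category.{v} D] [HasZeroMorphisms D]

variable {C : Type u} [Category.{v} C] [Abelian C]

/- ### Auxiliary lemmas -/

lemma Character.iso_add_zero (χ : Character C) {X Y : C} (e : X ≅ Y) :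
    χ.toFun Y = χ.toFun X + χ.toFun (0 : C) := by
  refine χ.additive X (0 : C)
    { pt := Y, fst := e.inv, snd := 0, inl := e.hom, inr := 0,
      inl_fst := e.hom_inv_id, inl_snd := Limits.comp_zero,
      inr_fst := Limits.zero_comp,
      inr_snd := (HasZeroObject.from_zero_ext _ _) } ?_
  refine isBinaryBilimitOfTotal _ ?_
  simp

lemma Character.map_zero (χ : Character C) : χ.toFun (0 : C) = 0 := by
  have := χ.iso_add_zero (Iso.refl (0 : C))
  omega

lemma Character.congr_iso (χ : Character C) {X Y : C} (e : X ≅ Y) :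
    χ.toFun X = χ.toFun Y := by
  have := χ.iso_add_zero e
  have := χ.map_zero
  omega

lemma Character.le_coker (χ : Character C) {X Y : C} (f : X ⟶ Y) :
    χ.toFun Y ≤ χ.toFun X + χ.toFun (cokernel f) :=
  χ.subadditive f (Cofork.ofπ (cokernel.π f) ((cokernel.condition f).trans zero_comp.symm)) (cokernelIsCokernel f)


section Chase
open CategoryTheory.Abelian CategoryTheory.Abelian.Pseudoelement

private lemma epi_chase {X Q T : C} (π : X ⟶ Q) [Epi π] (s : T ⟶ Q) [Mono s]
    (h : kernel (π ≫ cokernel.π s) ⟶ T)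
    (hh : h ≫ s = kernel.ι (π ≫ cokernel.π s) ≫ π) :
    Epi h := by
  apply epi_of_pseudo_surjective
  intro t
  obtain ⟨x, hx⟩ := pseudo_surjective_of_epi π (pseudoApply s t)
  have hfx : pseudoApply (π ≫ cokernel.π s) x = 0 := by
    rw [Pseudoelement.comp_apply, hx, ← Pseudoelement.comp_apply, cokernel.condition,
      Pseudoelement.zero_apply]
  obtain ⟨z, hz⟩ := pseudo_exact_of_exact
    (ShortComplex.exact_kernel (π ≫ cokernel.π s)) x hfx
  refine ⟨z, pseudo_injective_of_mono s ?_⟩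
  show pseudoApply s (pseudoApply h z) = pseudoApply s t
  rw [← Pseudoelement.comp_apply, hh, Pseudoelement.comp_apply]
  erw [hz]
  exact hx

end Chase

/-- The key bound: `χ(X) ≤ m · ∑ᵢ χ(Sᵢ)` for some `m` independent of the character `χ`. -/
lemma exists_bound (hN : ∀ X : C, IsNoetherianObject X) (hA : ∀ X : C, IsArtinianObject X)
    {ι : Type} [Fintype ι] (S : ι → C)
    (hSrep : ∀ X : C, Simple X → ∃ i, Nonempty (X ≅ S i)) (X : C) :
    ∃ m : ℕ, ∀ χ : Character C, χ.toFun X ≤ m * ∑ i, χ.toFun (S i) := by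
  haveI := hN X
  have key : ∀ Y : Subobject X,
      ∃ m : ℕ, ∀ χ : Character C, χ.toFun (cokernel Y.arrow) ≤ m * ∑ i, χ.toFun (S i) := by
    intro Y
    refine WellFounded.induction (C := fun Y : Subobject X => ∃ m : ℕ, ∀ χ : Character C,
        χ.toFun (cokernel Y.arrow) ≤ m * ∑ i, χ.toFun (S i))
      (wellFounded_gt (α := Subobject X)) Y ?_
    clear Y
    intro Y IH
    by_cases hQ : IsZero (cokernel Y.arrow)
    · refine ⟨0, fun χ => ?_⟩
      rw [χ.congr_iso hQ.isoZero, χ.map_zero]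
      omega
    · haveI := hA (cokernel Y.arrow)
      obtain ⟨T, hT⟩ := exists_simple_subobject hQ
      set π : X ⟶ cokernel Y.arrow := cokernel.π Y.arrow with hπ
      set s : (T : C) ⟶ cokernel Y.arrow := T.arrow with hs
      set f : X ⟶ cokernel s := π ≫ cokernel.π s with hf
      have hYπ : Y.arrow ≫ π = 0 := cokernel.condition Y.arrow
      have hcond : (kernel.ι f ≫ π) ≫ cokernel.π s = 0 := by
        rw [Category.assoc]; exact kernel.condition f
      set h : kernel f ⟶ (T : C) := Abelian.monoLift s (kernel.ι f ≫ π) hcond with hhdef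
      have hh : h ≫ s = kernel.ι f ≫ π := Abelian.monoLift_comp s _ hcond
      have hepi : Epi h := epi_chase π s h hh
      have hYZ : Y ≤ kernelSubobject f := le_kernelSubobject _ _ (by
        rw [hf, ← Category.assoc, hYπ, zero_comp])
      by_cases hlt : Y < kernelSubobject f
      · obtain ⟨m, hm⟩ := IH _ hlt
        haveI : Epi f := by rw [hf]; infer_instance
        have e2 : cokernel (kernel.ι f) ≅ cokernel s :=
          IsColimit.coconePointUniqueUpToIso (cokernelIsCokernel (kernel.ι f))
            (Abelian.epiIsCokernelOfKernel
              (Fork.ofι (kernel.ι f) ((kernel.condition f).trans comp_zero.symm))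
              (kernelIsKernel f))
        have e1 : cokernel (kernelSubobject f).arrow ≅ cokernel (kernel.ι f) :=
          (cokernelEpiComp (kernelSubobjectIso f).inv (kernelSubobject f).arrow).symm ≪≫
            cokernelIsoOfEq (kernelSubobject_arrow' f)
        refine ⟨m + 1, fun χ => ?_⟩
        have h1 : χ.toFun (cokernel Y.arrow) ≤ χ.toFun (T : C) + χ.toFun (cokernel s) :=
          χ.le_coker s
        obtain ⟨i, ⟨e⟩⟩ := hSrep (T : C) hT
        have h2 : χ.toFun (T : C) ≤ ∑ i, χ.toFun (S i) := by
          rw [χ.congr_iso e]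
          exact Finset.single_le_sum (f := fun i => χ.toFun (S i))
            (fun j _ => Nat.zero_le _) (Finset.mem_univ i)
        have h3 : χ.toFun (cokernel s) ≤ m * ∑ i, χ.toFun (S i) := by
          rw [← χ.congr_iso (e1 ≪≫ e2)]
          exact hm χ
        calc χ.toFun (cokernel Y.arrow) ≤ χ.toFun (T : C) + χ.toFun (cokernel s) := h1
          _ ≤ (∑ i, χ.toFun (S i)) + m * ∑ i, χ.toFun (S i) := Nat.add_le_add h2 h3
          _ = (m + 1) * ∑ i, χ.toFun (S i) := by ring
      · -- the kernel of `f` is `Y` itself, contradiction with simplicity of `T`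
        exfalso
        have hZY : kernelSubobject f ≤ Y :=
          le_of_eq (((lt_or_eq_of_le hYZ).resolve_left hlt).symm)
        have hZa : (kernelSubobject f).arrow ≫ π = 0 := by
          rw [← Subobject.ofLE_arrow hZY, Category.assoc, hYπ, comp_zero]
        have hki : kernel.ι f ≫ π = 0 := by
          rw [← kernelSubobject_arrow' f, Category.assoc, hZa, comp_zero]
        have hh0 : h = 0 := by
          have : h ≫ s = (0 : kernel f ⟶ (T : C)) ≫ s := by rw [hh, hki, zero_comp]
          exact (cancel_mono s).1 this
        have : IsZero (T : C) := by
          rw [hh0] at hepi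
          exact IsZero.of_epi_zero (kernel f) (T : C)
        exact (Simple.not_isZero (T : C)) this
  obtain ⟨m, hm⟩ := key ⊥
  refine ⟨m, fun χ => ?_⟩
  have e : cokernel (⊥ : Subobject X).arrow ≅ X :=
    cokernelIsoOfEq (Subobject.bot_arrow) ≪≫ cokernelZeroIsoTarget
  rw [← χ.congr_iso e]
  exact hm χ


/-- The zero character. -/
def Character.zero (D : Type u) [Category.{v} D] [HasZeroMorphisms D] : Character D where
  toFun := 0
  additive := fun _ _ _ _ => rfl
  subadditive := fun _ _ _ _ _ => le_refl 0

/-- Sum of two characters. -/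
def Character.add {D : Type u} [Category.{v} D] [HasZeroMorphisms D]
    (φ ψ : Character D) : Character D where
  toFun X := φ.toFun X + ψ.toFun X
  additive := fun X Y b hb => by
    rw [φ.additive X Y b hb, ψ.additive X Y b hb]; ring
  subadditive := fun X Y f c hc => by
    have h1 := φ.subadditive f c hc
    have h2 := ψ.subadditive f c hc
    omega

/-- A nonzero character is nonzero on some simple object. -/
lemma Character.one_le_deg (hN : ∀ X : C, IsNoetherianObject X) (hA : ∀ X : C, IsArtinianObject X)
    {ι : Type} [Fintype ι] (S : ι → C)
    (hSrep : ∀ X : C, Simple X → ∃ i, Nonempty (X ≅ S i))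
    {χ : Character C} (hχ : χ.toFun ≠ 0) : 1 ≤ ∑ i, χ.toFun (S i) := by
  by_contra hcon
  refine hχ (funext fun X => ?_)
  obtain ⟨m, hm⟩ := exists_bound hN hA S hSrep X
  have hb := hm χ
  have hz : ∑ i, χ.toFun (S i) = 0 := by omega
  rw [hz, Nat.mul_zero] at hb
  simp only [Pi.zero_apply]
  omega

/-- Every nonzero character has an irreducible summand. -/
lemma Character.exists_irreducible_summand (hN : ∀ X : C, IsNoetherianObject X)
    (hA : ∀ X : C, IsArtinianObject X) {ι : Type} [Fintype ι] (S : ι → C)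
    (hSrep : ∀ X : C, Simple X → ∃ i, Nonempty (X ≅ S i)) :
    ∀ (d : ℕ) (χ : Character C), χ.toFun ≠ 0 → ∑ i, χ.toFun (S i) ≤ d →
      ∃ θ ρ : Character C, θ.IsIrreducible ∧
        ∀ X : C, χ.toFun X = θ.toFun X + ρ.toFun X := by
  intro d
  induction d with
  | zero =>
    intro χ hχ hd
    have := Character.one_le_deg hN hA S hSrep hχ
    omega
  | succ d IHd =>
    intro χ hχ hd
    by_cases hirr : χ.IsIrreducible
    · exact ⟨χ, Character.zero C, hirr, fun X => rfl⟩
    · have hdec : ∃ φ ψ : Character C, φ.toFun ≠ 0 ∧ ψ.toFun ≠ 0 ∧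
          ∀ X : C, χ.toFun X = φ.toFun X + ψ.toFun X := by
        by_contra hcon
        exact hirr ⟨hχ, hcon⟩
      obtain ⟨φ, ψ, hφ, hψ, hsum⟩ := hdec
      have hψ1 : 1 ≤ ∑ i, ψ.toFun (S i) := Character.one_le_deg hN hA S hSrep hψ
      have hsplit : ∑ i, χ.toFun (S i) = (∑ i, φ.toFun (S i)) + ∑ i, ψ.toFun (S i) := by
        rw [← Finset.sum_add_distrib]
        exact Finset.sum_congr rfl fun i _ => hsum (S i)
      have hφd : ∑ i, φ.toFun (S i) ≤ d := by omega
      obtain ⟨θ, ρ, hθ, hrep⟩ := IHd φ hφ hφd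
      refine ⟨θ, ρ.add ψ, hθ, fun X => ?_⟩
      rw [hsum X, hrep X]
      show _ = θ.toFun X + (ρ.toFun X + ψ.toFun X)
      ring



lemma Character.eval_nonneg_s3 (χ : Character C) {X Y : C} (α : X ⟶ Y) : 0 ≤ χ.eval α := by
  have h := χ.le_coker α
  simp only [Character.eval]
  omega

theorem statement3' (k : Type w) [CommRing k] (C : Type u) [Category.{v} C] [Abelian C]
    [Linear k C] (hC : LengthCategory C k)
    (ι : Type) [Fintype ι] (S : ι → C) (hS : ∀ i, Simple (S i))
    (hSrep : ∀ X : C, Simple X → ∃ i, Nonempty (X ≅ S i))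
    (hSdistinct : ∀ i j, i ≠ j → IsEmpty (S i ≅ S j)) (n : ℕ) :
    @IsCompact (Sp C) (spTopology C) {χ : Sp C | ∑ i, χ.1.toFun (S i) ≤ n} := by
  obtain ⟨hN, hA, -, -⟩ := hC
  refine (@isCompact_iff_ultrafilter_le_nhds (Sp C) (spTopology C) _).mpr ?_
  intro U hU
  have hV : {χ : Sp C | ∑ i, χ.1.toFun (S i) ≤ n} ∈ U := Filter.le_principal_iff.mp hU
  -- the ultrafilter concentrates on a single value of `χ(X)` for every object `X`
  have hval : ∀ X : C, ∃ v : ℕ, {χ' : Sp C | χ'.1.toFun X = v} ∈ U := by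
    intro X
    obtain ⟨m, hm⟩ := exists_bound hN hA S hSrep X
    have hcover : {χ : Sp C | ∑ i, χ.1.toFun (S i) ≤ n} ⊆
        ⋃ v ∈ Set.Iic (m * n), {χ' : Sp C | χ'.1.toFun X = v} := by
      intro χ' hχ'
      have h1 : χ'.1.toFun X ≤ m * n := le_trans (hm χ'.1) (Nat.mul_le_mul (le_refl m) hχ')
      exact Set.mem_biUnion h1 rfl
    have hU2 : (⋃ v ∈ Set.Iic (m * n), {χ' : Sp C | χ'.1.toFun X = v}) ∈ U :=
      Filter.mem_of_superset hV hcover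
    obtain ⟨v, -, hv⟩ := (Ultrafilter.finite_biUnion_mem_iff (Set.finite_Iic _)).mp hU2
    exact ⟨v, hv⟩
  choose val hvalU using hval
  -- witnesses agreeing with `val` at any three prescribed objects
  have hw : ∀ X Y Z : C, ∃ χ' : Sp C, (∑ i, χ'.1.toFun (S i) ≤ n) ∧
      (∀ i, χ'.1.toFun (S i) = val (S i)) ∧
      χ'.1.toFun X = val X ∧ χ'.1.toFun Y = val Y ∧ χ'.1.toFun Z = val Z := by
    intro X Y Z
    have hmem := Filter.inter_mem hV (Filter.inter_mem
      ((Filter.iInter_mem).mpr fun i => hvalU (S i))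
      (Filter.inter_mem (hvalU X) (Filter.inter_mem (hvalU Y) (hvalU Z))))
    obtain ⟨χ', h1, h2, h3, h4, h5⟩ := U.nonempty_of_mem hmem
    exact ⟨χ', h1, fun i => Set.mem_iInter.mp h2 i, h3, h4, h5⟩
  -- the limit character
  obtain ⟨χ₀, hχ₀val⟩ : ∃ χ₀ : Character C, χ₀.toFun = val := by
    refine ⟨⟨val, ?_, ?_⟩, rfl⟩
    · intro X Y b hb
      obtain ⟨χ', -, -, h1, h2, h3⟩ := hw X Y b.pt
      rw [← h1, ← h2, ← h3]
      exact χ'.1.additive X Y b hb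
    · intro X Y f c hc
      obtain ⟨χ', -, -, h1, h2, h3⟩ := hw X Y c.pt
      rw [← h1, ← h2, ← h3]
      exact χ'.1.subadditive f c hc
  obtain ⟨χ'', hdeg_le, hvals, -, -, -⟩ := hw 0 0 0
  have hsum : ∑ i, χ₀.toFun (S i) = ∑ i, χ''.1.toFun (S i) := by
    refine Finset.sum_congr rfl fun i _ => ?_
    rw [hχ₀val, hvals i]
  have hdeg : ∑ i, χ₀.toFun (S i) ≤ n := by rw [hsum]; exact hdeg_le
  have hne : χ₀.toFun ≠ 0 := by
    intro h0
    have h1 : 1 ≤ ∑ i, χ''.1.toFun (S i) :=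
      Character.one_le_deg hN hA S hSrep χ''.2.1
    rw [← hsum, h0] at h1
    simp at h1
  obtain ⟨θ, ρ, hθ, hrep⟩ :=
    Character.exists_irreducible_summand hN hA S hSrep n χ₀ hne hdeg
  refine ⟨⟨θ, hθ⟩, ?_, ?_⟩
  · show ∑ i, θ.toFun (S i) ≤ n
    refine le_trans (Finset.sum_le_sum fun i _ => ?_) hdeg
    have := hrep (S i)
    omega
  · have hnh : @nhds (Sp C) (spTopology C) ⟨θ, hθ⟩ =
        ⨅ s ∈ {s : Set (Sp C) | (⟨θ, hθ⟩ : Sp C) ∈ s ∧ s ∈ spBasis C}, Filter.principal s :=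
      TopologicalSpace.nhds_generateFrom
    rw [hnh]
    refine le_iInf₂ fun t ht => ?_
    obtain ⟨hxt, A, B, α, rfl⟩ := ht
    rw [Filter.le_principal_iff]
    by_contra hmem
    have hcompl : {χ' : Sp C | χ'.1.eval α ≠ 0}ᶜ ∈ U :=
      (Ultrafilter.compl_mem_iff_notMem).mpr hmem
    have hmem2 := Filter.inter_mem hcompl (Filter.inter_mem (hvalU A)
      (Filter.inter_mem (hvalU B) (hvalU (cokernel α))))
    obtain ⟨χ', hc, hA', hB', hK'⟩ := U.nonempty_of_mem hmem2
    have hc' : χ'.1.eval α = 0 := not_not.mp hc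
    have hχ0 : χ₀.eval α = 0 := by
      simp only [Character.eval, hχ₀val] at hc' ⊢
      rw [← hA', ← hB', ← hK']
      exact hc'
    have hsplit : χ₀.eval α = θ.eval α + ρ.eval α := by
      simp only [Character.eval]
      have e1 := hrep A
      have e2 := hrep B
      have e3 := hrep (cokernel α)
      push_cast [e1, e2, e3]
      ring
    have hθpos : θ.eval α ≠ 0 := hxt
    have h5 := θ.eval_nonneg_s3 α
    have h6 := ρ.eval_nonneg_s3 α
    omega

/-- For every `n ∈ ℕ`, the subset `V_n = {χ ∈ Sp C | deg χ ≤ n}` is compact in `Sp C`;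
here `deg χ = ∑ᵢ χ(Sᵢ)` for a set of representatives `Sᵢ` of the isomorphism classes
of simple objects of `C`. -/
theorem statement3 (k : Type w) [CommRing k] (C : Type u) [Category.{v} C] [Abelian C]
    [Linear k C] (hC : LengthCategory C k)
    (ι : Type) [Fintype ι] (S : ι → C) (hS : ∀ i, Simple (S i))
    (hSrep : ∀ X : C, Simple X → ∃ i, Nonempty (X ≅ S i))
    (hSdistinct : ∀ i j, i ≠ j → IsEmpty (S i ≅ S j)) (n : ℕ) :
    @IsCompact (Sp C) (spTopology C) {χ : Sp C | ∑ i, χ.1.toFun (S i) ≤ n} :=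
  statement3' k C hC ι S hS hSrep hSdistinct n

end BrauerThrall
end
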